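/- Let C be a cycle of length n > 3 and G its complement graph. For r with 2r ≤ n, a set F ⊆ [n] of cardinality 2r is a union of r independent sets of G (equivalently, r pairwise disjoint edges of C) if and only if F satisfies Gale's evenness condition: for every i ≤ j with i, j ∉ F, the cardinality of {i, i+1, ..., j} ∩ F is even. -/

import Mathlib

open SimpleGraph Finset


def NEdge (n a b : ℕ) : Prop := (b = a + 1 ∧ b < n) ∨ (a = 0 ∧ b = n - 1)

lemma sub_val_one {n : ℕ} (hn : 3 < n) (u v : Fin n) :
    (u - v).val = 1 ↔ (u.val = v.val + 1 ∨ (u.val = 0 ∧ v.val = n - 1)) := by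
  have hu := u.isLt; have hv := v.isLt
  rw [Fin.sub_def]
  simp only [Fin.val_mk]
  rcases lt_or_ge u.val v.val with h | h
  · rw [Nat.mod_eq_of_lt (by omega)]; omega
  · rw [show n - v.val + u.val = (u.val - v.val) + n by omega, Nat.add_mod_right,
      Nat.mod_eq_of_lt (by omega)]
    omega

lemma adj_iff_nat {n : ℕ} (hn : 3 < n) (u v : Fin n) :
    (cycleGraph n).Adj u v ↔
      (u.val = v.val + 1 ∨ v.val = u.val + 1 ∨ (u.val = 0 ∧ v.val = n - 1) ∨
        (v.val = 0 ∧ u.val = n - 1)) := by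
  rw [cycleGraph_adj', sub_val_one hn, sub_val_one hn]
  tauto

lemma no_three {n : ℕ} (hn : 3 < n) {a b c : Fin n} (hab : a ≠ b) (hac : a ≠ c) (hbc : b ≠ c)
    (h1 : (cycleGraph n).Adj a b) (h2 : (cycleGraph n).Adj a c) (h3 : (cycleGraph n).Adj b c) :
    False := by
  rw [adj_iff_nat hn] at h1 h2 h3
  have hab' : a.val ≠ b.val := fun h => hab (Fin.ext h)
  have hac' : a.val ≠ c.val := fun h => hac (Fin.ext h)
  have hbc' : b.val ≠ c.val := fun h => hbc (Fin.ext h)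
  have := a.isLt; have := b.isLt; have := c.isLt
  omega


def NGale (n : ℕ) (S : Finset ℕ) : Prop :=
  ∀ i j : ℕ, i ≤ j → j < n → i ∉ S → j ∉ S →
    Even ((S.filter (fun k => i ≤ k ∧ k ≤ j)).card)

lemma key {n : ℕ} (hn : 3 < n) :
    ∀ r : ℕ, ∀ S : Finset ℕ, S.card = 2 * r → (∀ x ∈ S, x < n) → NGale n S →
    ∃ l : List (ℕ × ℕ), l.length = r ∧ (∀ p ∈ l, NEdge n p.1 p.2 ∧ p.1 ∈ S ∧ p.2 ∈ S) ∧
      (∀ x ∈ S, ∃ p ∈ l, x = p.1 ∨ x = p.2) := by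
  intro r
  induction r with
  | zero =>
    intro S hcard _ _
    refine ⟨[], rfl, by simp, ?_⟩
    have : S = ∅ := Finset.card_eq_zero.mp (by omega)
    simp [this]
  | succ r ih =>
    intro S hcard hbound hgale
    have step : ∀ a b : ℕ, a ∈ S → b ∈ S → a ≠ b → NEdge n a b →
        NGale n ((S.erase a).erase b) →
        ∃ l : List (ℕ × ℕ), l.length = r + 1 ∧
          (∀ p ∈ l, NEdge n p.1 p.2 ∧ p.1 ∈ S ∧ p.2 ∈ S) ∧
          (∀ x ∈ S, ∃ p ∈ l, x = p.1 ∨ x = p.2) := by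
      intro a b ha hb hab hedge hg'
      have hbmem : b ∈ S.erase a := Finset.mem_erase.mpr ⟨Ne.symm hab, hb⟩
      have hcard' : ((S.erase a).erase b).card = 2 * r := by
        rw [Finset.card_erase_of_mem hbmem, Finset.card_erase_of_mem ha]; omega
      obtain ⟨l, hlen, hprop, hcov⟩ := ih ((S.erase a).erase b) hcard'
        (fun x hx => hbound x (Finset.mem_of_mem_erase (Finset.mem_of_mem_erase hx))) hg'
      refine ⟨(a, b) :: l, by simp [hlen], ?_, ?_⟩
      · intro q hq
        rcases List.mem_cons.mp hq with rfl | hq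
        · exact ⟨hedge, ha, hb⟩
        · obtain ⟨h1, h2, h3⟩ := hprop q hq
          exact ⟨h1, Finset.mem_of_mem_erase (Finset.mem_of_mem_erase h2),
            Finset.mem_of_mem_erase (Finset.mem_of_mem_erase h3)⟩
      · intro x hx
        by_cases hxa : x = a
        · exact ⟨(a, b), List.mem_cons_self, Or.inl hxa⟩
        by_cases hxb : x = b
        · exact ⟨(a, b), List.mem_cons_self, Or.inr hxb⟩
        · obtain ⟨q, hq, hxq⟩ := hcov x
            (Finset.mem_erase.mpr ⟨hxb, Finset.mem_erase.mpr ⟨hxa, hx⟩⟩)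
          exact ⟨q, List.mem_cons_of_mem _ hq, hxq⟩
    have hne : S.Nonempty := Finset.card_pos.mp (by omega)
    have hMmem : S.max' hne ∈ S := S.max'_mem hne
    have hmmem : S.min' hne ∈ S := S.min'_mem hne
    set M := S.max' hne with hM
    set m := S.min' hne with hm
    have hmM : m < M := S.min'_lt_max'_of_card (by omega)
    have hMn : M < n := hbound M hMmem
    have hleM : ∀ x ∈ S, x ≤ M := fun x hx => S.le_max' x hx
    have hgem : ∀ x ∈ S, m ≤ x := fun x hx => S.min'_le x hx
    by_cases hMtop : M + 1 < n
    · -- Case 1 : suffix empty, remove {M-1, M}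
      have hMm1 : M - 1 ∈ S := by
        by_contra h
        have hx : M + 1 ∉ S := fun hc => by have := hleM _ hc; omega
        have he := hgale (M - 1) (M + 1) (by omega) hMtop h hx
        have hone : S.filter (fun k => M - 1 ≤ k ∧ k ≤ M + 1) = {M} := by
          ext k
          simp only [Finset.mem_filter, Finset.mem_singleton]
          constructor
          · rintro ⟨hk, h1, h2⟩
            have := hleM k hk
            have : k ≠ M - 1 := fun e => h (e ▸ hk)
            omega
          · rintro rfl
            exact ⟨hMmem, by omega, by omega⟩
        rw [hone] at he
        simp at he
      apply step (M - 1) M hMm1 hMmem (by omega) (Or.inl ⟨by omega, hMn⟩)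
      intro i j hij hjn hi hj
      have hS' : ∀ x, x ∈ (S.erase (M - 1)).erase M ↔ x ∈ S ∧ x ≠ M - 1 ∧ x ≠ M := by
        intro x
        simp only [Finset.mem_erase]
        tauto
      by_cases hiM : M - 1 ≤ i
      · have hemp : ((S.erase (M - 1)).erase M).filter (fun k => i ≤ k ∧ k ≤ j) = ∅ := by
          apply Finset.eq_empty_of_forall_notMem
          intro x hx
          rw [Finset.mem_filter, hS'] at hx
          have := hleM x hx.1.1
          omega
        rw [hemp]; simp
      · have hiS : i ∉ S := fun h => hi (by rw [hS']; exact ⟨h, by omega, by omega⟩)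
        by_cases hjM : j ≤ M - 2
        · have hjS : j ∉ S := fun h => hj (by rw [hS']; exact ⟨h, by omega, by omega⟩)
          have heq : ((S.erase (M - 1)).erase M).filter (fun k => i ≤ k ∧ k ≤ j)
              = S.filter (fun k => i ≤ k ∧ k ≤ j) := by
            ext x
            simp only [Finset.mem_filter, hS']
            constructor
            · rintro ⟨⟨h1, _⟩, h2⟩; exact ⟨h1, h2⟩
            · rintro ⟨h1, h2, h3⟩; exact ⟨⟨h1, by omega, by omega⟩, h2, h3⟩
          rw [heq]; exact hgale i j hij (by omega) hiS hjS
        · have heq : ((S.erase (M - 1)).erase M).filter (fun k => i ≤ k ∧ k ≤ j)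
              = (S.filter (fun k => i ≤ k ∧ k ≤ M + 1)) \ {M - 1, M} := by
            ext x
            simp only [Finset.mem_filter, Finset.mem_sdiff, hS', Finset.mem_insert,
              Finset.mem_singleton]
            constructor
            · rintro ⟨⟨h1, h2, h2'⟩, h3, h4⟩
              have := hleM x h1
              exact ⟨⟨h1, h3, by omega⟩, by omega⟩
            · rintro ⟨⟨h1, h2, h3⟩, h4⟩
              have := hleM x h1
              exact ⟨⟨h1, by omega, by omega⟩, h2, by omega⟩
          have hsub : ({M - 1, M} : Finset ℕ) ⊆ S.filter (fun k => i ≤ k ∧ k ≤ M + 1) := by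
            intro x hx
            rcases Finset.mem_insert.mp hx with rfl | hx
            · exact Finset.mem_filter.mpr ⟨hMm1, by omega, by omega⟩
            · rw [Finset.mem_singleton] at hx; subst hx
              exact Finset.mem_filter.mpr ⟨hMmem, by omega, by omega⟩
          have hMplus : M + 1 ∉ S := fun hc => by have := hleM _ hc; omega
          have heven := hgale i (M + 1) (by omega) (by omega) hiS hMplus
          rw [heq, Finset.card_sdiff_of_subset hsub, Finset.card_pair (by omega : M - 1 ≠ M)]
          exact heven.tsub (by decide)
    · have hM1 : M = n - 1 := by omega
      by_cases hm0 : 0 < m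
      · -- Case 2 : prefix empty, remove {m, m+1}
        have hmn : m + 1 < n := by omega
        have hm1 : m + 1 ∈ S := by
          by_contra h
          have hx : m - 1 ∉ S := fun hc => by have := hgem _ hc; omega
          have he := hgale (m - 1) (m + 1) (by omega) hmn hx h
          have hone : S.filter (fun k => m - 1 ≤ k ∧ k ≤ m + 1) = {m} := by
            ext k
            simp only [Finset.mem_filter, Finset.mem_singleton]
            constructor
            · rintro ⟨hk, h1, h2⟩
              have := hgem k hk
              have : k ≠ m + 1 := fun e => h (e ▸ hk)
              omega
            · rintro rfl; exact ⟨hmmem, by omega, by omega⟩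
          rw [hone] at he; simp at he
        apply step m (m + 1) hmmem hm1 (by omega) (Or.inl ⟨rfl, hmn⟩)
        intro i j hij hjn hi hj
        have hS' : ∀ x, x ∈ (S.erase m).erase (m + 1) ↔ x ∈ S ∧ m + 2 ≤ x := by
          intro x
          simp only [Finset.mem_erase]
          constructor
          · rintro ⟨h1, h2, h3⟩; exact ⟨h3, by have := hgem x h3; omega⟩
          · rintro ⟨h1, h2⟩; exact ⟨by omega, by omega, h1⟩
        by_cases hjm : j ≤ m + 1
        · have hemp : ((S.erase m).erase (m + 1)).filter (fun k => i ≤ k ∧ k ≤ j) = ∅ := by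
            apply Finset.eq_empty_of_forall_notMem
            intro x hx
            rw [Finset.mem_filter, hS'] at hx
            omega
          rw [hemp]; simp
        · have hjS : j ∉ S := fun h => hj (by rw [hS']; exact ⟨h, by omega⟩)
          by_cases him : m + 2 ≤ i
          · have hiS : i ∉ S := fun h => hi (by rw [hS']; exact ⟨h, him⟩)
            have heq : ((S.erase m).erase (m + 1)).filter (fun k => i ≤ k ∧ k ≤ j)
                = S.filter (fun k => i ≤ k ∧ k ≤ j) := by
              ext x
              simp only [Finset.mem_filter, hS']
              constructor
              · rintro ⟨⟨h1, _⟩, h2⟩; exact ⟨h1, h2⟩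
              · rintro ⟨h1, h2, h3⟩; exact ⟨⟨h1, by omega⟩, h2, h3⟩
            rw [heq]; exact hgale i j hij hjn hiS hjS
          · have hm1S : m - 1 ∉ S := fun hc => by have := hgem _ hc; omega
            have heq : ((S.erase m).erase (m + 1)).filter (fun k => i ≤ k ∧ k ≤ j)
                = (S.filter (fun k => m - 1 ≤ k ∧ k ≤ j)) \ {m, m + 1} := by
              ext x
              simp only [Finset.mem_filter, Finset.mem_sdiff, hS', Finset.mem_insert,
                Finset.mem_singleton]
              constructor
              · rintro ⟨⟨h1, h2⟩, h3, h4⟩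
                exact ⟨⟨h1, by omega, h4⟩, by omega⟩
              · rintro ⟨⟨h1, h2, h3⟩, h4⟩
                have := hgem x h1
                exact ⟨⟨h1, by omega⟩, by omega, h3⟩
            have hsub : ({m, m + 1} : Finset ℕ) ⊆ S.filter (fun k => m - 1 ≤ k ∧ k ≤ j) := by
              intro x hx
              rcases Finset.mem_insert.mp hx with rfl | hx
              · exact Finset.mem_filter.mpr ⟨hmmem, by omega, by omega⟩
              · rw [Finset.mem_singleton] at hx; subst hx
                exact Finset.mem_filter.mpr ⟨hm1, by omega, by omega⟩
            have heven := hgale (m - 1) j (by omega) hjn hm1S hjS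
            rw [heq, Finset.card_sdiff_of_subset hsub, Finset.card_pair (by omega : m ≠ m + 1)]
            exact heven.tsub (by decide)
      · -- Case 3 : 0 ∈ S and n-1 ∈ S
        have h0S : 0 ∈ S := by
          have hm' : m = 0 := by omega
          rwa [hm'] at hmmem
        have hn1S : n - 1 ∈ S := by rwa [hM1] at hMmem
        have hwrap : NEdge n 0 (n - 1) := Or.inr ⟨rfl, rfl⟩
        have hne01 : (0 : ℕ) ≠ n - 1 := by omega
        have hS' : ∀ x, x ∈ (S.erase 0).erase (n - 1) ↔ x ∈ S ∧ x ≠ 0 ∧ x ≠ n - 1 := by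
          intro x; simp only [Finset.mem_erase]; tauto
        by_cases hfull : ∀ k, k < n → k ∈ S
        · apply step 0 (n - 1) h0S hn1S hne01 hwrap
          intro i j hij hjn hi hj
          have hi' : i = 0 ∨ i = n - 1 := by
            by_contra h; push_neg at h
            exact hi (by rw [hS']; exact ⟨hfull i (by omega), h.1, h.2⟩)
          have hj' : j = 0 ∨ j = n - 1 := by
            by_contra h; push_neg at h
            exact hj (by rw [hS']; exact ⟨hfull j hjn, h.1, h.2⟩)
          rcases hi' with rfl | hi2
          · rcases hj' with rfl | hj2
            · have hemp : ((S.erase 0).erase (n - 1)).filter (fun k => 0 ≤ k ∧ k ≤ 0) = ∅ := by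
                apply Finset.eq_empty_of_forall_notMem
                intro x hx
                rw [Finset.mem_filter, hS'] at hx
                omega
              rw [hemp]; simp
            · subst hj2
              have hfe : ((S.erase 0).erase (n - 1)).filter (fun k => 0 ≤ k ∧ k ≤ n - 1)
                  = (S.erase 0).erase (n - 1) := by
                apply Finset.filter_true_of_mem
                intro x hx
                rw [hS'] at hx
                have := hbound x hx.1
                omega
              have hc : ((S.erase 0).erase (n - 1)).card = 2 * r := by
                rw [Finset.card_erase_of_mem (Finset.mem_erase.mpr ⟨by omega, hn1S⟩),
                  Finset.card_erase_of_mem h0S]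
                omega
              rw [hfe, hc]
              exact even_two_mul r
          · have hj2 : j = n - 1 := by omega
            subst hj2; subst hi2
            have hemp : ((S.erase 0).erase (n - 1)).filter
                (fun k => n - 1 ≤ k ∧ k ≤ n - 1) = ∅ := by
              apply Finset.eq_empty_of_forall_notMem
              intro x hx
              rw [Finset.mem_filter, hS'] at hx
              have := hbound x hx.1.1
              omega
            rw [hemp]; simp
        · push_neg at hfull
          obtain ⟨k0, hk0n, hk0S⟩ := hfull
          have hex : ∃ k, k ∉ S := ⟨k0, hk0S⟩
          have hpS : Nat.find hex ∉ S := Nat.find_spec hex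
          set p := Nat.find hex with hp
          have hless : ∀ q, q < p → q ∈ S := by
            intro q hq
            by_contra h
            exact Nat.find_min hex hq h
          have hp1 : 1 ≤ p := by
            rcases Nat.eq_zero_or_pos p with h | h
            · rw [h] at hpS; exact absurd h0S hpS
            · exact h
          have hpn : p < n - 1 := by
            have h1 : p ≤ k0 := Nat.find_min' hex hk0S
            have h2 : p ≠ n - 1 := fun e => hpS (e ▸ hn1S)
            omega
          have count0 : ∀ j, j < n → j ∉ S →
              (S.filter (fun k => k ≤ j)).card
                = p + (S.filter (fun k => p ≤ k ∧ k ≤ j)).card := by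
            intro j hjn hjS
            have hpj : p ≤ j := by
              by_contra h
              exact hjS (hless j (by omega))
            have hun : S.filter (fun k => k ≤ j)
                = Finset.range p ∪ S.filter (fun k => p ≤ k ∧ k ≤ j) := by
              ext x
              simp only [Finset.mem_filter, Finset.mem_union, Finset.mem_range]
              constructor
              · rintro ⟨h1, h2⟩
                rcases lt_or_ge x p with h | h
                · exact Or.inl h
                · exact Or.inr ⟨h1, h, h2⟩
              · rintro (h | ⟨h1, h2, h3⟩)
                · exact ⟨hless x h, by omega⟩
                · exact ⟨h1, h3⟩
            have hdisj : Disjoint (Finset.range p) (S.filter (fun k => p ≤ k ∧ k ≤ j)) := by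
              rw [Finset.disjoint_left]
              intro x hx hx2
              rw [Finset.mem_range] at hx
              rw [Finset.mem_filter] at hx2
              omega
            rw [hun, Finset.card_union_of_disjoint hdisj, Finset.card_range]
          by_cases hpe : Even p
          · -- prefix even : remove {0, 1}
            have h1S : 1 ∈ S := by
              apply hless
              obtain ⟨c, hc⟩ := hpe
              omega
            apply step 0 1 h0S h1S (by omega) (Or.inl ⟨rfl, by omega⟩)
            intro i j hij hjn hi hj
            have hT : ∀ x, x ∈ (S.erase 0).erase 1 ↔ x ∈ S ∧ 2 ≤ x := by
              intro x
              simp only [Finset.mem_erase]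
              constructor
              · rintro ⟨h1, h2, h3⟩; exact ⟨h3, by omega⟩
              · rintro ⟨h1, h2⟩; exact ⟨by omega, by omega, h1⟩
            by_cases hi2 : 2 ≤ i
            · have hiS : i ∉ S := fun h => hi (by rw [hT]; exact ⟨h, hi2⟩)
              have hjS : j ∉ S := fun h => hj (by rw [hT]; exact ⟨h, by omega⟩)
              have heq : ((S.erase 0).erase 1).filter (fun k => i ≤ k ∧ k ≤ j)
                  = S.filter (fun k => i ≤ k ∧ k ≤ j) := by
                ext x
                simp only [Finset.mem_filter, hT]
                constructor
                · rintro ⟨⟨h1, _⟩, h2⟩; exact ⟨h1, h2⟩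
                · rintro ⟨h1, h2, h3⟩; exact ⟨⟨h1, by omega⟩, h2, h3⟩
              rw [heq]; exact hgale i j hij hjn hiS hjS
            · by_cases hj1 : j ≤ 1
              · have hemp : ((S.erase 0).erase 1).filter (fun k => i ≤ k ∧ k ≤ j) = ∅ := by
                  apply Finset.eq_empty_of_forall_notMem
                  intro x hx
                  rw [Finset.mem_filter, hT] at hx
                  omega
                rw [hemp]; simp
              · have hjS : j ∉ S := fun h => hj (by rw [hT]; exact ⟨h, by omega⟩)
                have heq : ((S.erase 0).erase 1).filter (fun k => i ≤ k ∧ k ≤ j)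
                    = (S.filter (fun k => k ≤ j)) \ {0, 1} := by
                  ext x
                  simp only [Finset.mem_filter, Finset.mem_sdiff, hT, Finset.mem_insert,
                    Finset.mem_singleton]
                  constructor
                  · rintro ⟨⟨h1, h2⟩, h3, h4⟩
                    exact ⟨⟨h1, h4⟩, by omega⟩
                  · rintro ⟨⟨h1, h2⟩, h3⟩
                    exact ⟨⟨h1, by omega⟩, by omega, h2⟩
                have hsub : ({0, 1} : Finset ℕ) ⊆ S.filter (fun k => k ≤ j) := by
                  intro x hx
                  rcases Finset.mem_insert.mp hx with rfl | hx
                  · exact Finset.mem_filter.mpr ⟨h0S, by omega⟩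
                  · rw [Finset.mem_singleton] at hx; subst hx
                    exact Finset.mem_filter.mpr ⟨h1S, by omega⟩
                have hpj : p ≤ j := by
                  by_contra h
                  exact hjS (hless j (by omega))
                have heven := hgale p j hpj hjn hpS hjS
                rw [heq, Finset.card_sdiff_of_subset hsub, Finset.card_pair (by omega : (0:ℕ) ≠ 1),
                  count0 j hjn hjS]
                exact (hpe.add heven).tsub (by decide)
          · -- prefix odd : remove wrap edge {0, n-1}
            apply step 0 (n - 1) h0S hn1S hne01 hwrap
            intro i j hij hjn hi hj
            by_cases hi0 : i = 0
            · subst hi0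
              by_cases hj0 : j = 0
              · subst hj0
                have hemp : ((S.erase 0).erase (n - 1)).filter (fun k => 0 ≤ k ∧ k ≤ 0) = ∅ := by
                  apply Finset.eq_empty_of_forall_notMem
                  intro x hx
                  rw [Finset.mem_filter, hS'] at hx
                  omega
                rw [hemp]; simp
              · by_cases hjn1 : j = n - 1
                · subst hjn1
                  have hfe : ((S.erase 0).erase (n - 1)).filter (fun k => 0 ≤ k ∧ k ≤ n - 1)
                      = (S.erase 0).erase (n - 1) := by
                    apply Finset.filter_true_of_mem
                    intro x hx
                    rw [hS'] at hx
                    have := hbound x hx.1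
                    omega
                  have hc : ((S.erase 0).erase (n - 1)).card = 2 * r := by
                    rw [Finset.card_erase_of_mem (Finset.mem_erase.mpr ⟨by omega, hn1S⟩),
                      Finset.card_erase_of_mem h0S]
                    omega
                  rw [hfe, hc]
                  exact even_two_mul r
                · have hjS : j ∉ S := fun h => hj (by rw [hS']; exact ⟨h, hj0, hjn1⟩)
                  have heq : ((S.erase 0).erase (n - 1)).filter (fun k => 0 ≤ k ∧ k ≤ j)
                      = (S.filter (fun k => k ≤ j)) \ {0} := by
                    ext x
                    simp only [Finset.mem_filter, Finset.mem_sdiff, hS', Finset.mem_singleton]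
                    constructor
                    · rintro ⟨⟨h1, h2, h3⟩, h4, h5⟩
                      exact ⟨⟨h1, h5⟩, h2⟩
                    · rintro ⟨⟨h1, h2⟩, h3⟩
                      exact ⟨⟨h1, h3, by omega⟩, by omega, h2⟩
                  have hsub : ({0} : Finset ℕ) ⊆ S.filter (fun k => k ≤ j) := by
                    intro x hx
                    rw [Finset.mem_singleton] at hx; subst hx
                    exact Finset.mem_filter.mpr ⟨h0S, by omega⟩
                  have hpj : p ≤ j := by
                    by_contra h
                    exact hjS (hless j (by omega))
                  obtain ⟨c, hc⟩ := hgale p j hpj hjn hpS hjS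
                  obtain ⟨d, hd⟩ := Nat.not_even_iff_odd.mp hpe
                  rw [heq, Finset.card_sdiff_of_subset hsub, Finset.card_singleton,
                    count0 j hjn hjS, hc, hd]
                  exact ⟨d + c, by omega⟩
            · by_cases hin1 : i = n - 1
              · have hj2 : j = n - 1 := by omega
                subst hj2; subst hin1
                have hemp : ((S.erase 0).erase (n - 1)).filter
                    (fun k => n - 1 ≤ k ∧ k ≤ n - 1) = ∅ := by
                  apply Finset.eq_empty_of_forall_notMem
                  intro x hx
                  rw [Finset.mem_filter, hS'] at hx
                  have := hbound x hx.1.1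
                  omega
                rw [hemp]; simp
              · have hiS : i ∉ S := fun h => hi (by rw [hS']; exact ⟨h, hi0, hin1⟩)
                by_cases hjn1 : j = n - 1
                · subst hjn1
                  have heq : ((S.erase 0).erase (n - 1)).filter (fun k => i ≤ k ∧ k ≤ n - 1)
                      = (S.filter (fun k => i ≤ k)) \ {n - 1} := by
                    ext x
                    simp only [Finset.mem_filter, Finset.mem_sdiff, hS', Finset.mem_singleton]
                    constructor
                    · rintro ⟨⟨h1, h2, h3⟩, h4, h5⟩
                      exact ⟨⟨h1, h4⟩, h3⟩
                    · rintro ⟨⟨h1, h2⟩, h3⟩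
                      have := hbound x h1
                      exact ⟨⟨h1, by omega, h3⟩, h2, by omega⟩
                  have hsub : ({n - 1} : Finset ℕ) ⊆ S.filter (fun k => i ≤ k) := by
                    intro x hx
                    rw [Finset.mem_singleton] at hx; subst hx
                    exact Finset.mem_filter.mpr ⟨hn1S, by omega⟩
                  have hsplit : S.filter (fun k => i ≤ k) = S \ (S.filter (fun k => k ≤ i)) := by
                    ext x
                    simp only [Finset.mem_filter, Finset.mem_sdiff, not_and]
                    constructor
                    · rintro ⟨h1, h2⟩
                      refine ⟨h1, fun h3 h4 => ?_⟩
                      have hxi : x = i := by omega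
                      exact hiS (hxi ▸ h1)
                    · rintro ⟨h1, h2⟩
                      refine ⟨h1, ?_⟩
                      by_contra h
                      exact h2 h1 (by omega)
                  have hin : i < n := by omega
                  have hc1 := count0 i hin hiS
                  have hpi : p ≤ i := by
                    by_contra h
                    exact hiS (hless i (by omega))
                  obtain ⟨c, hc⟩ := hgale p i hpi hin hpS hiS
                  obtain ⟨d, hd⟩ := Nat.not_even_iff_odd.mp hpe
                  have hle := Finset.card_filter_le S (fun k => k ≤ i)
                  rw [heq, Finset.card_sdiff_of_subset hsub, Finset.card_singleton, hsplit,
                    Finset.card_sdiff_of_subset (Finset.filter_subset _ _), hcard, hc1]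
                  rw [hc1, hcard] at hle
                  rw [hc, hd] at hle ⊢
                  exact ⟨r - d - c, by omega⟩
                · have hjS : j ∉ S := fun h => hj (by rw [hS']; exact ⟨h, by omega, hjn1⟩)
                  have heq : ((S.erase 0).erase (n - 1)).filter (fun k => i ≤ k ∧ k ≤ j)
                      = S.filter (fun k => i ≤ k ∧ k ≤ j) := by
                    ext x
                    simp only [Finset.mem_filter, hS']
                    constructor
                    · rintro ⟨⟨h1, _, _⟩, h2⟩; exact ⟨h1, h2⟩
                    · rintro ⟨h1, h2, h3⟩
                      have := hbound x h1
                      exact ⟨⟨h1, by omega, by omega⟩, h2, h3⟩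
                  rw [heq]; exact hgale i j hij hjn hiS hjS

/-- for the complement `G` of a cycle of length `n > 3` and `2r ≤ n`,
a set `F` of cardinality `2r` is a union of `r` independent sets of `G` iff `F`
satisfies Gale's evenness condition. -/
theorem stmt_10 (n r : ℕ) (hn : 3 < n) (hr : 2 * r ≤ n) (F : Finset (Fin n))
    (hF : F.card = 2 * r) :
    (∃ f : Fin r → Set (Fin n),
        (∀ t : Fin r, ∀ a ∈ f t, ∀ b ∈ f t, ¬ (cycleGraph n)ᶜ.Adj a b) ∧
        (↑F : Set (Fin n)) = ⋃ t, f t) ↔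
      (∀ i j : Fin n, i ≤ j → i ∉ F → j ∉ F →
        Even ((F.filter (fun k => i ≤ k ∧ k ≤ j)).card)) := by
  constructor
  · -- union of cliques → Gale evenness
    rintro ⟨f, hcliq, hunion⟩
    intro i j hij hiF hjF
    classical
    set g : Fin r → Finset (Fin n) := fun t => F.filter (· ∈ f t) with hg
    have hFg : F = Finset.univ.biUnion g := by
      ext x
      simp only [Finset.mem_biUnion, Finset.mem_univ, true_and, hg, Finset.mem_filter]
      constructor
      · intro hx
        have hx' : (x : Fin n) ∈ (↑F : Set (Fin n)) := hx
        rw [hunion] at hx'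
        obtain ⟨t, ht⟩ := Set.mem_iUnion.mp hx'
        exact ⟨t, hx, ht⟩
      · rintro ⟨t, hx, _⟩; exact hx
    have hg2 : ∀ t, (g t).card ≤ 2 := by
      intro t
      by_contra h
      push_neg at h
      obtain ⟨a, b, c, ha, hb, hc, hab, hac, hbc⟩ := Finset.two_lt_card_iff.mp h
      have hadj : ∀ x ∈ g t, ∀ y ∈ g t, x ≠ y → (cycleGraph n).Adj x y := by
        intro x hx y hy hxy
        have hx' := (Finset.mem_filter.mp hx).2
        have hy' := (Finset.mem_filter.mp hy).2
        have hcc := hcliq t x hx' y hy'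
        rw [compl_adj] at hcc
        push_neg at hcc
        exact hcc hxy
      exact no_three hn hab hac hbc (hadj a ha b hb hab) (hadj a ha c hc hac)
        (hadj b hb c hc hbc)
    have hsum : ∀ s : Fin r, ∀ T : Finset (Fin n),
        ((Finset.univ.erase s).biUnion g ∪ T).card ≤ 2 * (r - 1) + T.card := by
      intro s T
      have h1 : ((Finset.univ.erase s).biUnion g ∪ T).card
          ≤ ((Finset.univ.erase s).biUnion g).card + T.card := Finset.card_union_le _ _
      have h2 : ((Finset.univ.erase s).biUnion g).card
          ≤ ∑ t ∈ Finset.univ.erase s, (g t).card := Finset.card_biUnion_le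
      have h3 : ∑ t ∈ Finset.univ.erase s, (g t).card ≤ (Finset.univ.erase s).card • 2 :=
        Finset.sum_le_card_nsmul _ _ 2 (fun x _ => hg2 x)
      have h4 : (Finset.univ.erase s).card = r - 1 := by
        rw [Finset.card_erase_of_mem (Finset.mem_univ s), Finset.card_univ, Fintype.card_fin]
      rw [h4, smul_eq_mul] at h3
      omega
    have hcard2 : ∀ s : Fin r, (g s).card = 2 := by
      intro s
      have hsub : F ⊆ (Finset.univ.erase s).biUnion g ∪ g s := by
        intro x hx
        rw [hFg] at hx
        obtain ⟨t, _, hxt⟩ := Finset.mem_biUnion.mp hx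
        by_cases hts : t = s
        · exact Finset.mem_union_right _ (hts ▸ hxt)
        · exact Finset.mem_union_left _
            (Finset.mem_biUnion.mpr ⟨t, Finset.mem_erase.mpr ⟨hts, Finset.mem_univ t⟩, hxt⟩)
      have hb := (Finset.card_le_card hsub).trans (hsum s (g s))
      have hrpos : 0 < r := s.pos
      have := hg2 s
      omega
    have hdisj : ∀ s ∈ Finset.univ (α := Fin r), ∀ t ∈ Finset.univ (α := Fin r), s ≠ t →
        Disjoint (g s) (g t) := by
      intro s _ t _ hst
      rw [Finset.disjoint_left]
      intro x hxs hxt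
      have hsub : F ⊆ (Finset.univ.erase s).biUnion g ∪ (g s).erase x := by
        intro y hy
        rw [hFg] at hy
        obtain ⟨u, _, hyu⟩ := Finset.mem_biUnion.mp hy
        by_cases hus : u = s
        · subst hus
          by_cases hyx : y = x
          · subst hyx
            exact Finset.mem_union_left _ (Finset.mem_biUnion.mpr
              ⟨t, Finset.mem_erase.mpr ⟨Ne.symm hst, Finset.mem_univ t⟩, hxt⟩)
          · exact Finset.mem_union_right _ (Finset.mem_erase.mpr ⟨hyx, hyu⟩)
        · exact Finset.mem_union_left _ (Finset.mem_biUnion.mpr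
            ⟨u, Finset.mem_erase.mpr ⟨hus, Finset.mem_univ u⟩, hyu⟩)
      have hb := (Finset.card_le_card hsub).trans (hsum s ((g s).erase x))
      rw [Finset.card_erase_of_mem hxs, hcard2 s] at hb
      have hrpos : 0 < r := s.pos
      omega
    have hsplit : F.filter (fun k => i ≤ k ∧ k ≤ j)
        = Finset.univ.biUnion (fun t => (g t).filter (fun k => i ≤ k ∧ k ≤ j)) := by
      conv_lhs => rw [hFg]
      exact Finset.filter_biUnion _ _ _
    rw [hsplit, Finset.card_biUnion
      (fun s hs t ht hst => Finset.disjoint_filter_filter (hdisj s hs t ht hst))]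
    apply Finset.even_sum
    intro t _
    obtain ⟨a, b, hab, hgt⟩ := Finset.card_eq_two.mp (hcard2 t)
    have hag : a ∈ g t := by rw [hgt]; simp
    have hbg : b ∈ g t := by rw [hgt]; simp
    have haF : a ∈ F := (Finset.mem_filter.mp hag).1
    have hbF : b ∈ F := (Finset.mem_filter.mp hbg).1
    have hadj : (cycleGraph n).Adj a b := by
      have hcc := hcliq t a (Finset.mem_filter.mp hag).2 b (Finset.mem_filter.mp hbg).2
      rw [compl_adj] at hcc
      push_neg at hcc
      exact hcc hab
    rw [adj_iff_nat hn] at hadj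
    have hia : i.val ≠ a.val := fun e => hiF ((Fin.ext e : i = a) ▸ haF)
    have hib : i.val ≠ b.val := fun e => hiF ((Fin.ext e : i = b) ▸ hbF)
    have hja : j.val ≠ a.val := fun e => hjF ((Fin.ext e : j = a) ▸ haF)
    have hjb : j.val ≠ b.val := fun e => hjF ((Fin.ext e : j = b) ▸ hbF)
    have hij' : i.val ≤ j.val := hij
    have hiff : (i ≤ a ∧ a ≤ j) ↔ (i ≤ b ∧ b ≤ j) := by
      simp only [Fin.le_def]
      have := i.isLt; have := j.isLt; have := a.isLt; have := b.isLt
      omega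
    by_cases hp : i ≤ a ∧ a ≤ j
    · rw [Finset.filter_true_of_mem, hgt, Finset.card_pair hab]
      · exact ⟨1, rfl⟩
      · intro x hx
        rw [hgt] at hx
        rcases Finset.mem_insert.mp hx with rfl | hx
        · exact hp
        · rw [Finset.mem_singleton] at hx; subst hx; exact hiff.mp hp
    · rw [Finset.filter_false_of_mem, Finset.card_empty]
      · exact Even.zero
      · intro x hx
        rw [hgt] at hx
        rcases Finset.mem_insert.mp hx with rfl | hx
        · exact hp
        · rw [Finset.mem_singleton] at hx; subst hx
          exact fun hc => hp (hiff.mpr hc)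
  · -- Gale evenness → union of matching edges
    intro hgale
    classical
    set S : Finset ℕ := F.image Fin.val with hS
    have hmemS : ∀ x : Fin n, x.val ∈ S ↔ x ∈ F := by
      intro x
      simp only [hS, Finset.mem_image]
      constructor
      · rintro ⟨a, ha, hax⟩
        exact (Fin.ext hax : a = x) ▸ ha
      · intro hx; exact ⟨x, hx, rfl⟩
    have hcardS : S.card = 2 * r := by
      rw [hS, Finset.card_image_of_injective _ Fin.val_injective, hF]
    have hboundS : ∀ x ∈ S, x < n := by
      intro x hx
      rw [hS, Finset.mem_image] at hx
      obtain ⟨a, _, rfl⟩ := hx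
      exact a.isLt
    have hgaleS : NGale n S := by
      intro i j hij hjn hiS hjS
      have hin : i < n := lt_of_le_of_lt hij hjn
      have himg : S.filter (fun k => i ≤ k ∧ k ≤ j)
          = (F.filter (fun k => (⟨i, hin⟩ : Fin n) ≤ k ∧ k ≤ ⟨j, hjn⟩)).image Fin.val := by
        ext x
        simp only [Finset.mem_filter, Finset.mem_image, hS, Fin.le_def]
        constructor
        · rintro ⟨⟨a, ha, rfl⟩, h1, h2⟩
          exact ⟨a, ⟨ha, h1, h2⟩, rfl⟩
        · rintro ⟨a, ⟨ha, h1, h2⟩, rfl⟩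
          exact ⟨⟨a, ha, rfl⟩, h1, h2⟩
      rw [himg, Finset.card_image_of_injective _ Fin.val_injective]
      exact hgale ⟨i, hin⟩ ⟨j, hjn⟩ (Fin.mk_le_mk.mpr hij)
        (fun h => hiS ((hmemS ⟨i, hin⟩).mpr h))
        (fun h => hjS ((hmemS ⟨j, hjn⟩).mpr h))
    obtain ⟨l, hlen, hprop, hcov⟩ := key hn r S hcardS hboundS hgaleS
    subst hlen
    refine ⟨fun t => {x : Fin n | x.val = (l.get t).1 ∨ x.val = (l.get t).2}, ?_, ?_⟩
    · intro t a ha b hb hadj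
      rw [compl_adj] at hadj
      obtain ⟨hne, hnadj⟩ := hadj
      obtain ⟨hedge, h1S, h2S⟩ := hprop (l.get t) (List.get_mem l t)
      simp only [Set.mem_setOf_eq] at ha hb
      apply hnadj
      rw [adj_iff_nat hn]
      have hne' : a.val ≠ b.val := fun e => hne (Fin.ext e)
      rcases hedge with ⟨h1, h2⟩ | ⟨h1, h2⟩ <;> omega
    · ext x
      simp only [Finset.mem_coe, Set.mem_iUnion, Set.mem_setOf_eq]
      constructor
      · intro hx
        obtain ⟨q, hq, hxq⟩ := hcov x.val ((hmemS x).mpr hx)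
        obtain ⟨t, ht⟩ := List.mem_iff_get.mp hq
        exact ⟨t, by rw [ht]; exact hxq⟩
      · rintro ⟨t, hxt⟩
        obtain ⟨hedge, h1S, h2S⟩ := hprop (l.get t) (List.get_mem l t)
        rcases hxt with h | h
        · exact (hmemS x).mp (by rw [h]; exact h1S)
        · exact (hmemS x).mp (by rw [h]; exact h2S)
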